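/- For every positive natural number n, we have (1/n) · ∑_{k=1}^{n} gcd(n, k) = ∏_{p prime, p ∣ n} (1 + (1 - 1/p) · ord_p(n)), where the equality is between rational numbers. -/

import Mathlib

open Finset

lemma sum_gcd_eq (n : ℕ) (hn : 0 < n) :
    ∑ k ∈ Finset.Icc 1 n, Nat.gcd n k = ∑ d ∈ n.divisors, d * Nat.totient (n / d) := by
  have h0 : ∑ k ∈ Finset.Icc 1 n, Nat.gcd n k = ∑ k ∈ Finset.range n, Nat.gcd n k := by
    have e1 : Finset.Icc 1 n = insert n (Finset.Ico 1 n) := by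
      rw [Finset.Ico_insert_right hn]
    have e2 : Finset.range n = insert 0 (Finset.Ico 1 n) := by
      rw [Finset.range_eq_Ico, ← Finset.Ioo_insert_left hn, show Finset.Ico 1 n = Finset.Ioo 0 n from Finset.Ico_add_one_left_eq_Ioo 0 n]
    rw [e1, e2, Finset.sum_insert (by simp), Finset.sum_insert (by simp)]
    simp [Nat.gcd_self, Nat.gcd_zero_right]
  rw [h0, ← Finset.sum_fiberwise_of_maps_to (g := fun k => Nat.gcd n k)
    (fun k _ => Nat.mem_divisors.mpr ⟨Nat.gcd_dvd_left n k, hn.ne'⟩)]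
  apply Finset.sum_congr rfl
  intro d hd
  rw [Finset.sum_congr rfl (fun k hk => (Finset.mem_filter.mp hk).2),
    Finset.sum_const, smul_eq_mul, ← Nat.totient_div_of_dvd (Nat.mem_divisors.mp hd).1,
    mul_comm]

def phiA : ArithmeticFunction ℕ := ⟨Nat.totient, Nat.totient_zero⟩

lemma phiA_mult : phiA.IsMultiplicative :=
  ⟨Nat.totient_one, fun h => Nat.totient_mul h⟩

def F : ArithmeticFunction ℕ := ArithmeticFunction.id * phiA

lemma F_apply (n : ℕ) : F n = ∑ d ∈ n.divisors, d * Nat.totient (n / d) := by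
  rw [show F n = ∑ x ∈ n.divisorsAntidiagonal, x.1 * Nat.totient x.2 from rfl]
  exact Nat.sum_divisorsAntidiagonal (fun d e => d * Nat.totient e)

lemma F_mult : F.IsMultiplicative :=
  ArithmeticFunction.isMultiplicative_id.mul phiA_mult

lemma F_prime_pow {p : ℕ} (hp : p.Prime) (a : ℕ) :
    F (p ^ a) = p ^ a + a * (p ^ (a - 1) * (p - 1)) := by
  rw [F_apply, Nat.sum_divisors_prime_pow hp]
  have key : ∀ i ∈ Finset.range (a + 1), p ^ i * Nat.totient (p ^ a / p ^ i)
      = if i = a then p ^ a else p ^ (a - 1) * (p - 1) := by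
    intro i hi
    have hi' : i ≤ a := Nat.lt_succ_iff.mp (Finset.mem_range.mp hi)
    rw [Nat.pow_div hi' hp.pos]
    by_cases h : i = a
    · simp [h]
    · have hlt : 0 < a - i := Nat.sub_pos_of_lt (lt_of_le_of_ne hi' h)
      rw [if_neg h, Nat.totient_prime_pow hp hlt, ← mul_assoc, ← pow_add]
      congr 2
      omega
  rw [Finset.sum_congr rfl key, Finset.sum_range_succ, if_pos rfl,
    Finset.sum_congr rfl (fun i hi => if_neg (Finset.mem_range.mp hi).ne),
    Finset.sum_const, Finset.card_range, smul_eq_mul, add_comm]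

theorem stmt_0 (n : ℕ) (hn : 0 < n) :
    (1 / (n : ℚ)) * ∑ k ∈ Finset.Icc 1 n, (Nat.gcd n k : ℚ) =
      ∏ p ∈ n.primeFactors, (1 + (1 - 1 / (p : ℚ)) * (n.factorization p : ℚ)) := by
  have hsum : ∑ k ∈ Finset.Icc 1 n, (Nat.gcd n k : ℚ) = (F n : ℚ) := by
    rw [F_apply, ← sum_gcd_eq n hn]
    push_cast
    rfl
  have hfn : (F n : ℚ) = ∏ p ∈ n.primeFactors, (F (p ^ n.factorization p) : ℚ) := by
    rw [F_mult.multiplicative_factorization F hn.ne']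
    rw [Finsupp.prod, Nat.support_factorization]
    push_cast
    rfl
  have hnn : (n : ℚ) = ∏ p ∈ n.primeFactors, ((p : ℚ) ^ n.factorization p) := by
    conv_lhs => rw [← Nat.factorization_prod_pow_eq_self hn.ne']
    rw [Finsupp.prod, Nat.support_factorization]
    push_cast
    rfl
  rw [hsum, hfn, hnn, one_div, ← Finset.prod_inv_distrib, ← Finset.prod_mul_distrib]
  apply Finset.prod_congr rfl
  intro p hp
  have hpp : p.Prime := Nat.prime_of_mem_primeFactors hp
  have ha : 1 ≤ n.factorization p := (Nat.Prime.factorization_pos_of_dvd hpp hn.ne'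
    (Nat.dvd_of_mem_primeFactors hp))
  set a := n.factorization p with hadef
  have hp0 : (p : ℚ) ≠ 0 := Nat.cast_ne_zero.mpr hpp.pos.ne'
  have hFv : (F (p ^ a) : ℚ) = (p : ℚ) ^ a + a * ((p : ℚ) ^ (a - 1) * ((p : ℚ) - 1)) := by
    rw [F_prime_pow hpp a]
    push_cast [Nat.cast_sub hpp.one_le]
    ring
  have hpa : (p : ℚ) ^ a = (p : ℚ) ^ (a - 1) * p := by
    rw [← pow_succ]
    congr 1
    omega
  rw [hFv, hpa]
  have hpm : (p : ℚ) ^ (a - 1) ≠ 0 := pow_ne_zero _ hp0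
  field_simp
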